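/- Suppose G is a finite group with CD(G) = {Z(G), G}. Then G admits no proper central product: whenever G = AB with [A,B] = 1, at least one of A or B is abelian (equivalently contained in Z(G)). -/
import Mathlib


open scoped Pointwise

/-- Relative Chermak–Delgado measure `m_W(K) = |K| * |C_W(K)|`. -/
noncomputable def m {G : Type*} [Group G] (W K : Subgroup G) : ℕ :=
  Nat.card K * Nat.card (W ⊓ Subgroup.centralizer (K : Set G) : Subgroup G)

/-- The Chermak–Delgado lattice of `W`: subgroups of `W` maximizing `m W`. -/
def CD {G : Type*} [Group G] (W : Subgroup G) : Set (Subgroup G) :=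
  {K | K ≤ W ∧ ∀ L ≤ W, m W L ≤ m W K}

/-- `m*(W)`, the maximal Chermak–Delgado measure over subgroups of `W`. -/
noncomputable def mstar {G : Type*} [Group G] (W : Subgroup G) : ℕ :=
  ⨆ K : {K : Subgroup G // K ≤ W}, m W K

theorem stmt17 {G : Type*} [Group G] [Finite G]
    (hCD : CD (⊤ : Subgroup G) = {Subgroup.center G, (⊤ : Subgroup G)}) :
    ∀ A B : Subgroup G, (∀ g : G, ∃ a ∈ A, ∃ b ∈ B, g = a * b) →
      (∀ a ∈ A, ∀ b ∈ B, a * b = b * a) →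
      A ≤ Subgroup.center G ∨ B ≤ Subgroup.center G := by
  intro A B hsurj hcomm
  set Z := Subgroup.center G with hZdef
  set A' : Subgroup G := A ⊔ Z with hA'
  set B' : Subgroup G := B ⊔ Z with hB'
  -- everything in A ⊔ Z commutes with every element of B, and conversely
  have hbc : ∀ b ∈ B, A' ≤ Subgroup.centralizer {b} := by
    intro b hb
    rw [hA']
    apply sup_le
    · intro a ha
      rw [Subgroup.mem_centralizer_iff]
      intro h hh
      rw [Set.mem_singleton_iff] at hh
      rw [hh]
      exact (hcomm a ha b hb).symm
    · exact Subgroup.center_le_centralizer _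
  -- B' centralizes A'
  have hB'C : B' ≤ Subgroup.centralizer (A' : Set G) := by
    rw [hB']
    apply sup_le
    · intro b hb
      rw [Subgroup.mem_centralizer_iff]
      intro h hh
      exact (Subgroup.mem_centralizer_iff.mp (hbc b hb hh) b rfl).symm
    · exact Subgroup.center_le_centralizer _
  -- A is normal
  haveI hAn : A.Normal := by
    constructor
    intro n hn g
    obtain ⟨a, ha, b, hb, rfl⟩ := hsurj g
    have hbn : b * n * b⁻¹ = n := by
      rw [← hcomm n hn b hb]; group
    have : a * b * n * (a * b)⁻¹ = a * (b * n * b⁻¹) * a⁻¹ := by group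
    rw [this, hbn]
    exact A.mul_mem (A.mul_mem ha hn) (A.inv_mem ha)
  haveI hA'n : A'.Normal := by rw [hA']; infer_instance
  -- the natural map B' →* G ⧸ A' is surjective
  let φ : B' →* G ⧸ A' := (QuotientGroup.mk' A').comp B'.subtype
  have hφsurj : Function.Surjective φ := by
    intro q
    induction q using QuotientGroup.induction_on with
    | H g =>
      obtain ⟨a, ha, b, hb, rfl⟩ := hsurj g
      refine ⟨⟨b, Subgroup.mem_sup_left hb⟩, ?_⟩
      show QuotientGroup.mk b = QuotientGroup.mk (a * b)
      rw [QuotientGroup.eq]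
      have : b⁻¹ * (a * b) = a := by
        rw [hcomm a ha b hb]; group
      rw [this]
      exact Subgroup.mem_sup_left ha
  -- |Z| ≤ |ker φ|
  have hZker : Z.subgroupOf B' ≤ φ.ker := by
    intro x hx
    have hxZ : (x : G) ∈ Z := hx
    show QuotientGroup.mk (x : G) = 1
    rw [QuotientGroup.eq_one_iff]
    exact Subgroup.mem_sup_right hxZ
  have hcardZ : Nat.card Z ≤ Nat.card φ.ker := by
    calc Nat.card Z = Nat.card (Z.subgroupOf B') :=
          (Nat.card_congr (Subgroup.subgroupOfEquivOfLe le_sup_right).toEquiv).symm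
      _ ≤ Nat.card φ.ker := Subgroup.card_le_of_le hZker
  -- |B'| = |G ⧸ A'| * |ker φ| ≥ index A' * |Z|
  have hB'card : A'.index * Nat.card Z ≤ Nat.card B' := by
    have h1 : Nat.card B' = Nat.card (G ⧸ A') * Nat.card φ.ker := by
      rw [Subgroup.card_eq_card_quotient_mul_card_subgroup φ.ker]
      congr 1
      exact Nat.card_congr (QuotientGroup.quotientKerEquivOfSurjective φ hφsurj).toEquiv
    rw [h1, Subgroup.index_eq_card]
    exact Nat.mul_le_mul_left _ hcardZ
  -- the measure of Z is |Z| * |G|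
  have hCtop : Subgroup.centralizer ((Z : Subgroup G) : Set G) = ⊤ := by
    rw [eq_top_iff]
    intro x _
    rw [Subgroup.mem_centralizer_iff]
    intro h hh
    exact (Subgroup.mem_center_iff.mp hh x).symm
  have hmZ : m (⊤ : Subgroup G) Z = Nat.card Z * Nat.card G := by
    rw [m, hCtop, top_inf_eq, Subgroup.card_top]
  -- m ⊤ A' ≥ |Z| * |G|
  have hmA' : Nat.card Z * Nat.card G ≤ m (⊤ : Subgroup G) A' := by
    rw [m, top_inf_eq]
    calc Nat.card Z * Nat.card G
        = Nat.card Z * (Nat.card A' * A'.index) := by rw [Subgroup.card_mul_index]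
      _ = Nat.card A' * (A'.index * Nat.card Z) := by ring
      _ ≤ Nat.card A' * Nat.card B' := Nat.mul_le_mul_left _ hB'card
      _ ≤ Nat.card A' * Nat.card (Subgroup.centralizer (A' : Set G)) :=
          Nat.mul_le_mul_left _ (Subgroup.card_le_of_le hB'C)
  -- Z is in CD ⊤
  have hZCD : Z ∈ CD (⊤ : Subgroup G) := by
    rw [hCD]; exact Or.inl rfl
  -- hence A' is in CD ⊤
  have hA'CD : A' ∈ CD (⊤ : Subgroup G) := by
    refine ⟨le_top, fun L hL => ?_⟩
    calc m ⊤ L ≤ m ⊤ Z := hZCD.2 L hL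
      _ = Nat.card Z * Nat.card G := hmZ
      _ ≤ m ⊤ A' := hmA'
  rw [hCD] at hA'CD
  rcases hA'CD with h | h
  · left
    calc A ≤ A' := le_sup_left
      _ = Z := h
  · right
    intro b hb
    rw [Subgroup.mem_center_iff]
    intro g
    have hg : g ∈ A' := h ▸ Subgroup.mem_top g
    exact (Subgroup.mem_centralizer_iff.mp (hbc b hb hg) b rfl).symm
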